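/- Let ω ∈ (0,2] and k ∈ ℕ, k ≥ 1, and set δ := k^{−ω}. Define I(ω,k) := ∫₀^δ [ ∫_r^∞ e^{−k s^{1/ω}} s^{1/ω − 2} ds ]² r dr. Then there is a constant c > 0, depending only on ω, such that I(ω,k) ≤ c/k². -/

import Mathlib

open MeasureTheory Set Filter Complex Polynomial Asymptotics

noncomputable section

/-- `Γ ⊆ ℂ` is a Jordan curve: the image of a continuous periodic parametrization
which is injective on a period. -/
def IsJordanCurve (Γ : Set ℂ) : Prop :=
  ∃ φ : ℝ → ℂ, Continuous φ ∧ Function.Periodic φ 1 ∧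
    Set.InjOn φ (Set.Ico (0 : ℝ) 1) ∧ φ '' Set.Ico (0 : ℝ) 1 = Γ

/-- `Γ` is a rectifiable Jordan curve: a Jordan curve with a parametrization of
finite total variation. -/
def IsRectifiableJordanCurve (Γ : Set ℂ) : Prop :=
  ∃ φ : ℝ → ℂ, Continuous φ ∧ Function.Periodic φ 1 ∧
    Set.InjOn φ (Set.Ico (0 : ℝ) 1) ∧ φ '' Set.Ico (0 : ℝ) 1 = Γ ∧
    eVariationOn φ (Set.Icc (0 : ℝ) 1) ≠ ⊤

/-- `Γ` is a quasiconformal curve: it is a Jordan curve and there is a constant `M`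
such that any two points `z, ζ ∈ Γ` are joined by a subarc of `Γ` of diameter at
most `M * |z - ζ|`. -/
def IsQuasiconformalCurve (Γ : Set ℂ) : Prop :=
  IsJordanCurve Γ ∧
  ∃ M : ℝ, ∀ z ζ : ℂ, z ∈ Γ → ζ ∈ Γ →
    ∃ A : Set ℂ, IsConnected A ∧ A ⊆ Γ ∧ z ∈ A ∧ ζ ∈ A ∧
      Metric.diam A ≤ M * ‖z - ζ‖

/-- `Γ` is a piecewise analytic Jordan curve without cusps: it admits a periodic
parametrization `φ` which, on each of finitely many parameter subintervals, extends
to a real-analytic map with nonvanishing derivative (analytic arcs), and at each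
corner the two one-sided tangent vectors are not opposite, i.e. the exterior angles
are `ω·π` with `0 < ω < 2` (no cusps). -/
def IsPiecewiseAnalyticWithoutCusps (Γ : Set ℂ) : Prop :=
  ∃ (N : ℕ) (t : ℕ → ℝ) (φ : ℝ → ℂ),
    0 < N ∧ StrictMono t ∧ t 0 = 0 ∧
    Function.Periodic φ (t N) ∧ Continuous φ ∧
    Set.InjOn φ (Set.Ico 0 (t N)) ∧ φ '' Set.Ico 0 (t N) = Γ ∧
    (∀ j < N, ∃ g : ℝ → ℂ,
      Set.EqOn g φ (Set.Icc (t j) (t (j + 1))) ∧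
      AnalyticOnNhd ℝ g (Set.Icc (t j) (t (j + 1))) ∧
      ∀ s ∈ Set.Icc (t j) (t (j + 1)), deriv g s ≠ 0) ∧
    (∀ j : ℕ, 1 ≤ j → j ≤ N →
      ¬ ∃ c : ℝ, c < 0 ∧
        derivWithin φ (Set.Ici (t j)) (t j) =
          (c : ℂ) * derivWithin φ (Set.Iic (t j)) (t j))

/-- The Wirtinger derivative `∂f/∂z` of `f : ℂ → ℂ`, viewed as a real-differentiable map. -/
def wderivZ (f : ℂ → ℂ) (z : ℂ) : ℂ :=
  (fderiv ℝ f z (1 : ℂ) - Complex.I * fderiv ℝ f z Complex.I) / 2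

/-- The Wirtinger derivative `∂f/∂z̄` of `f : ℂ → ℂ`. -/
def wderivZbar (f : ℂ → ℂ) (z : ℂ) : ℂ :=
  (fderiv ℝ f z (1 : ℂ) + Complex.I * fderiv ℝ f z Complex.I) / 2

/-- `k ∈ [0,1)` is a reflection factor of the curve `Γ = frontier G`: the curve
admits a `K`-quasiconformal reflection `y` with `k = (K-1)/(K+1)`, i.e. a
sense-reversing involution of `ℂ̄` fixing `Γ` pointwise and interchanging `G`
and the exterior domain (the point `a ∈ G` corresponding to `∞`), whose complex
dilatation satisfies `|y_z| ≤ k·|y_z̄|` almost everywhere. -/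
def IsReflectionFactor (G : Set ℂ) (k : ℝ) : Prop :=
  0 ≤ k ∧ k < 1 ∧
  ∃ (y : ℂ → ℂ) (a : ℂ), a ∈ G ∧
    ContinuousOn y {a}ᶜ ∧
    (∀ z : ℂ, z ∉ frontier G → z ≠ a → DifferentiableAt ℝ y z) ∧
    (∀ z ∈ frontier G, y z = z) ∧
    (∀ z : ℂ, z ≠ a → y (y z) = z) ∧
    y '' (G \ {a}) = (closure G)ᶜ ∧
    y '' ((closure G)ᶜ) = G \ {a} ∧
    (∀ᵐ z : ℂ, ‖wderivZ y z‖ ≤ k * ‖wderivZbar y z‖) ∧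
    (∀ᵐ z : ℂ, wderivZbar y z ≠ 0)

/-- A bounded simply connected Jordan domain `G ⊆ ℂ`. -/
structure DomainSetup where
  G : Set ℂ
  isOpen : IsOpen G
  nonempty : G.Nonempty
  bounded : Bornology.IsBounded G
  connected : IsConnected G
  simplyConnected : SimplyConnectedSpace G
  jordan : IsJordanCurve (frontier G)

/-- A Jordan domain together with the exterior conformal map
`Φ : Ω = (closure G)ᶜ → Δ = {w : |w| > 1}`, normalized so that
`Φ(z) = γ z + γ₀ + O(1/z)` near infinity with `γ > 0`. -/
structure ExtSetup extends DomainSetup where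
  Φ : ℂ → ℂ
  γ : ℝ
  γ₀ : ℂ
  γ_pos : 0 < γ
  Φ_diff : DifferentiableOn ℂ Φ (closure G)ᶜ
  Φ_injOn : Set.InjOn Φ (closure G)ᶜ
  Φ_image : Φ '' (closure G)ᶜ = {w : ℂ | 1 < ‖w‖}
  Φ_normal : Filter.Tendsto (fun z : ℂ => Φ z - ((γ : ℂ) * z + γ₀))
    (Filter.cocompact ℂ) (nhds 0)

/-- The Bergman orthonormal polynomials of `G`: `p n` is a polynomial of degree `n`
with positive leading coefficient `lam n`, and the family is orthonormal with
respect to the inner product `⟪f, g⟫ = ∫_G f · conj g dA`. -/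
structure BergmanPolynomials (G : Set ℂ) where
  p : ℕ → Polynomial ℂ
  lam : ℕ → ℝ
  lam_pos : ∀ n, 0 < lam n
  deg : ∀ n, (p n).natDegree = n
  lead : ∀ n, (p n).coeff n = (lam n : ℂ)
  ortho : ∀ m n, (∫ z in G, (p m).eval z * (starRingEnd ℂ) ((p n).eval z)) =
    if m = n then (1 : ℂ) else 0

open intervalIntegral

/-- **Lemma 5.1.** For `ω ∈ (0,2]` and `k ∈ ℕ`, `k ≥ 1`, with `δ = k^(-ω)`,
the integral `I(ω,k) = ∫₀^δ (∫_r^∞ e^(-k s^(1/ω)) s^(1/ω-2) ds)² r dr`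
satisfies `I(ω,k) ≤ c/k²` with `c` depending only on `ω`. -/
theorem integral_estimate
    (ω : ℝ) (hω : 0 < ω) (hω2 : ω ≤ 2) :
    ∃ c : ℝ, 0 < c ∧ ∀ k : ℕ, 1 ≤ k →
      (∫ r in Set.Ioo (0 : ℝ) ((k : ℝ) ^ (-ω)),
          (∫ s in Set.Ioi r, Real.exp (-(k : ℝ) * s ^ (1 / ω)) * s ^ (1 / ω - 2)) ^ 2 * r)
        ≤ c / (k : ℝ) ^ 2 := by
  have hα12 : (1:ℝ)/2 ≤ 1/ω := by
    rw [div_le_div_iff₀ (by norm_num) hω]; linarith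
  set α : ℝ := 1 / ω with hαdef
  have hβ0 : (0:ℝ) < α - 1/4 := by linarith
  refine ⟨4/(α - 1/4)^2 + 1, by positivity, fun k hk => ?_⟩
  set K : ℝ := (k:ℝ) with hKdef
  have hK1 : (1:ℝ) ≤ K := by rw [hKdef]; exact_mod_cast hk
  have hK0 : (0:ℝ) < K := by linarith
  set δ : ℝ := K ^ (-ω) with hδdef
  have hδ0 : 0 < δ := Real.rpow_pos_of_pos hK0 _
  set A : ℝ := δ ^ (α - 1/4) / (α - 1/4) with hAdef
  have hA0 : 0 ≤ A := by positivity
  set T : ℝ := K ^ (ω - 1) with hTdef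
  have hT0 : 0 < T := Real.rpow_pos_of_pos hK0 _
  set f : ℝ → ℝ := fun s => Real.exp (-K * s ^ α) * s ^ (α - 2) with hfdef
  -- continuity of f away from 0
  have hfc : ∀ s : Set ℝ, (∀ x ∈ s, x ≠ 0) → ContinuousOn f s := by
    intro s hs x hx
    have hx0 := hs x hx
    have h2 : ContinuousAt (fun s : ℝ => s ^ α) x :=
      Real.continuousAt_rpow_const x α (Or.inl hx0)
    have h3 : ContinuousAt (fun s : ℝ => s ^ (α - 2)) x :=
      Real.continuousAt_rpow_const x (α - 2) (Or.inl hx0)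
    have h4 : ContinuousAt (fun s : ℝ => -K * s ^ α) x := continuousAt_const.mul h2
    exact ((Real.continuous_exp.continuousAt.comp h4).mul h3).continuousWithinAt
  -- integrability on (r, δ]
  have hfint : ∀ r : ℝ, 0 < r → IntegrableOn f (Set.Ioc r δ) := by
    intro r hr0
    refine (ContinuousOn.integrableOn_Icc ?_).mono_set Set.Ioc_subset_Icc_self
    exact hfc _ (fun x hx => (lt_of_lt_of_le hr0 hx.1).ne')
  -- tail pointwise bound
  have htail_bd : ∀ s : ℝ, δ < s → f s ≤ K⁻¹ * s ^ (-2:ℝ) := by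
    intro s hs
    have hs0 : (0:ℝ) < s := lt_trans hδ0 hs
    have hx : (0:ℝ) < K * s ^ α := by
      have := Real.rpow_pos_of_pos hs0 α
      positivity
    have hexp : Real.exp (-K * s ^ α) ≤ (K * s ^ α)⁻¹ := by
      rw [neg_mul, Real.exp_neg]
      apply inv_anti₀ hx
      have := Real.add_one_le_exp (K * s ^ α)
      linarith
    have h1 : f s ≤ (K * s ^ α)⁻¹ * s ^ (α - 2) :=
      mul_le_mul_of_nonneg_right hexp (Real.rpow_nonneg hs0.le _)
    have h2 : (K * s ^ α)⁻¹ * s ^ (α - 2) = K⁻¹ * s ^ (-2:ℝ) := by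
      rw [mul_inv, mul_assoc, ← Real.rpow_neg hs0.le, ← Real.rpow_add hs0]
      congr 1
      ring
    linarith [h1, h2.le, h2.ge]
  have hf_nonneg : ∀ s : ℝ, 0 < s → 0 ≤ f s := fun s hs =>
    mul_nonneg (Real.exp_nonneg _) (Real.rpow_nonneg hs.le _)
  -- tail integrability
  have htail_maj : IntegrableOn (fun s : ℝ => K⁻¹ * s ^ (-2:ℝ)) (Set.Ioi δ) :=
    (integrableOn_Ioi_rpow_of_lt (by norm_num) hδ0).const_mul K⁻¹
  have htail_int : IntegrableOn f (Set.Ioi δ) := by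
    refine Integrable.mono' htail_maj
      ((hfc _ (fun x hx => (lt_trans hδ0 hx).ne')).aestronglyMeasurable measurableSet_Ioi) ?_
    filter_upwards [ae_restrict_mem measurableSet_Ioi] with s hs
    rw [Real.norm_eq_abs, _root_.abs_of_nonneg (hf_nonneg s (lt_trans hδ0 hs))]
    exact htail_bd s hs
  -- tail integral bound
  have htail : (∫ s in Set.Ioi δ, f s) ≤ T := by
    have h1 : (∫ s in Set.Ioi δ, f s) ≤ ∫ s in Set.Ioi δ, K⁻¹ * s ^ (-2:ℝ) :=
      setIntegral_mono_on htail_int htail_maj measurableSet_Ioi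
        (fun s hs => htail_bd s hs)
    have h2 : (∫ s in Set.Ioi δ, K⁻¹ * s ^ (-2:ℝ)) = K⁻¹ * δ⁻¹ := by
      rw [MeasureTheory.integral_const_mul, integral_Ioi_rpow_of_lt (by norm_num) hδ0,
        show ((-2:ℝ)+1) = -1 by norm_num, Real.rpow_neg_one]
      ring
    have h3 : K⁻¹ * δ⁻¹ = T := by
      rw [hδdef, ← Real.rpow_neg hK0.le, neg_neg, hTdef, ← Real.rpow_neg_one K,
        ← Real.rpow_add hK0]
      congr 1
      ring
    linarith
  -- head integral value
  have hhead_val : (∫ s in Set.Ioc (0:ℝ) δ, s ^ (α - 1/4 - 1)) = A := by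
    rw [← integral_of_le hδ0.le,
      integral_rpow (Or.inl (by linarith : (-1:ℝ) < α - 1/4 - 1))]
    have h : α - 1/4 - 1 + 1 = α - 1/4 := by ring
    rw [h, Real.zero_rpow hβ0.ne', sub_zero, hAdef]
  have hhead_int : IntegrableOn (fun s : ℝ => s ^ (α - 1/4 - 1)) (Set.Ioc (0:ℝ) δ) :=
    (intervalIntegrable_rpow' (by linarith : (-1:ℝ) < α - 1/4 - 1) (a := 0) (b := δ)).1
  -- inner integral nonneg
  have hJ0 : ∀ r : ℝ, 0 < r → 0 ≤ ∫ s in Set.Ioi r, f s := by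
    intro r hr0
    exact setIntegral_nonneg measurableSet_Ioi (fun s hs => hf_nonneg s (lt_trans hr0 hs))
  -- inner integral bound
  have hJ : ∀ r ∈ Set.Ioo (0:ℝ) δ, (∫ s in Set.Ioi r, f s) ≤ A * r ^ (-(3:ℝ)/4) + T := by
    rintro r ⟨hr0, hrδ⟩
    have hsplit : (∫ s in Set.Ioi r, f s)
        = (∫ s in Set.Ioc r δ, f s) + ∫ s in Set.Ioi δ, f s := by
      rw [← setIntegral_union (Set.Ioc_disjoint_Ioi le_rfl) measurableSet_Ioi
        (hfint r hr0) htail_int, Set.Ioc_union_Ioi_eq_Ioi hrδ.le]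
    have hmaj_int : IntegrableOn (fun s : ℝ => r ^ (-(3:ℝ)/4) * s ^ (α - 1/4 - 1))
        (Set.Ioc r δ) := by
      have h : IntegrableOn (fun s : ℝ => s ^ (α - 1/4 - 1)) (Set.Ioc r δ) :=
        (intervalIntegrable_rpow' (by linarith : (-1:ℝ) < α - 1/4 - 1) (a := r) (b := δ)).1
      exact h.const_mul _
    have hhead : (∫ s in Set.Ioc r δ, f s) ≤ A * r ^ (-(3:ℝ)/4) := by
      have h1 : (∫ s in Set.Ioc r δ, f s)
          ≤ ∫ s in Set.Ioc r δ, r ^ (-(3:ℝ)/4) * s ^ (α - 1/4 - 1) := by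
        refine setIntegral_mono_on (hfint r hr0) hmaj_int measurableSet_Ioc ?_
        rintro s ⟨hrs, hsδ⟩
        have hs0 : (0:ℝ) < s := lt_trans hr0 hrs
        have hexp : Real.exp (-K * s ^ α) ≤ 1 := by
          rw [Real.exp_le_one_iff, neg_mul, neg_nonpos]
          positivity
        have h2 : f s ≤ s ^ (α - 2) := by
          calc f s ≤ 1 * s ^ (α - 2) :=
                mul_le_mul_of_nonneg_right hexp (Real.rpow_nonneg hs0.le _)
            _ = s ^ (α - 2) := one_mul _
        have h3 : s ^ (α - 2) = s ^ (-(3:ℝ)/4) * s ^ (α - 1/4 - 1) := by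
          rw [← Real.rpow_add hs0]
          congr 1
          ring
        have h4 : s ^ (-(3:ℝ)/4) ≤ r ^ (-(3:ℝ)/4) :=
          Real.rpow_le_rpow_of_nonpos hr0 hrs.le (by norm_num)
        calc f s ≤ s ^ (-(3:ℝ)/4) * s ^ (α - 1/4 - 1) := by rw [← h3]; exact h2
          _ ≤ r ^ (-(3:ℝ)/4) * s ^ (α - 1/4 - 1) :=
              mul_le_mul_of_nonneg_right h4 (Real.rpow_nonneg hs0.le _)
      have h5 : (∫ s in Set.Ioc r δ, r ^ (-(3:ℝ)/4) * s ^ (α - 1/4 - 1))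
          = r ^ (-(3:ℝ)/4) * ∫ s in Set.Ioc r δ, s ^ (α - 1/4 - 1) :=
        MeasureTheory.integral_const_mul _ _
      have h6 : (∫ s in Set.Ioc r δ, s ^ (α - 1/4 - 1))
          ≤ ∫ s in Set.Ioc (0:ℝ) δ, s ^ (α - 1/4 - 1) := by
        refine setIntegral_mono_set hhead_int ?_ ((Set.Ioc_subset_Ioc_left hr0.le).eventuallyLE)
        filter_upwards [ae_restrict_mem measurableSet_Ioc] with s hs
        exact Real.rpow_nonneg hs.1.le _
      have h7 : (0:ℝ) ≤ r ^ (-(3:ℝ)/4) := Real.rpow_nonneg hr0.le _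
      calc (∫ s in Set.Ioc r δ, f s)
          ≤ r ^ (-(3:ℝ)/4) * ∫ s in Set.Ioc r δ, s ^ (α - 1/4 - 1) := by rw [← h5]; exact h1
        _ ≤ r ^ (-(3:ℝ)/4) * ∫ s in Set.Ioc (0:ℝ) δ, s ^ (α - 1/4 - 1) :=
            mul_le_mul_of_nonneg_left h6 h7
        _ = A * r ^ (-(3:ℝ)/4) := by rw [hhead_val]; ring
    rw [hsplit]
    exact add_le_add hhead htail
  -- majorant for outer integral
  set g : ℝ → ℝ := fun r => 2*A^2 * r ^ (-(1:ℝ)/2) + 2*T^2 * r with hgdef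
  have hg1int : IntegrableOn (fun r : ℝ => 2*A^2 * r ^ (-(1:ℝ)/2)) (Set.Ioo 0 δ) := by
    have h : IntegrableOn (fun r : ℝ => r ^ (-(1:ℝ)/2)) (Set.Ioc (0:ℝ) δ) :=
      (intervalIntegrable_rpow' (by norm_num : (-1:ℝ) < -(1:ℝ)/2) (a := 0) (b := δ)).1
    exact MeasureTheory.IntegrableOn.mono_set (h.const_mul _) Set.Ioo_subset_Ioc_self
  have hg2int : IntegrableOn (fun r : ℝ => 2*T^2 * r) (Set.Ioo 0 δ) :=
    (((continuous_const.mul continuous_id).continuousOn.integrableOn_Icc)).mono_set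
      Set.Ioo_subset_Icc_self
  have hgint : IntegrableOn g (Set.Ioo 0 δ) := hg1int.add hg2int
  have hmain : (∫ r in Set.Ioo (0:ℝ) δ, (∫ s in Set.Ioi r, f s) ^ 2 * r)
      ≤ ∫ r in Set.Ioo (0:ℝ) δ, g r := by
    refine integral_mono_of_nonneg ?_ hgint ?_
    · filter_upwards [ae_restrict_mem measurableSet_Ioo] with r hr
      exact mul_nonneg (sq_nonneg _) hr.1.le
    · filter_upwards [ae_restrict_mem measurableSet_Ioo] with r hr
      have hr0 := hr.1
      have hx := hJ r hr
      have hx0 := hJ0 r hr0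
      have hsq : (r ^ (-(3:ℝ)/4))^2 * r = r ^ (-(1:ℝ)/2) := by
        rw [← Real.rpow_natCast (r ^ (-(3:ℝ)/4)) 2, ← Real.rpow_mul hr0.le,
          ← Real.rpow_add_one hr0.ne']
        norm_num
      have h2 : (∫ s in Set.Ioi r, f s) ^ 2 ≤ (A * r ^ (-(3:ℝ)/4) + T)^2 := by
        nlinarith [hx, hx0]
      have h3 : (∫ s in Set.Ioi r, f s) ^ 2 * r ≤ (A * r ^ (-(3:ℝ)/4) + T)^2 * r :=
        mul_le_mul_of_nonneg_right h2 hr0.le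
      have h4 : (A * r ^ (-(3:ℝ)/4) + T)^2 * r ≤ 2*A^2 * ((r ^ (-(3:ℝ)/4))^2 * r) + 2*T^2 * r := by
        nlinarith [mul_nonneg hr0.le (sq_nonneg (A * r ^ (-(3:ℝ)/4) - T))]
      simp only [hgdef]
      rw [← hsq]
      linarith
  -- value of majorant integral
  have hval1 : (∫ r in Set.Ioo (0:ℝ) δ, r ^ (-(1:ℝ)/2)) = 2 * δ ^ ((1:ℝ)/2) := by
    rw [← MeasureTheory.integral_Ioc_eq_integral_Ioo, ← integral_of_le hδ0.le,
      integral_rpow (Or.inl (by norm_num : (-1:ℝ) < -(1:ℝ)/2))]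
    have h : -(1:ℝ)/2 + 1 = 1/2 := by norm_num
    rw [h, Real.zero_rpow (by norm_num : (1:ℝ)/2 ≠ 0), sub_zero]
    ring
  have hval2 : (∫ r in Set.Ioo (0:ℝ) δ, r) = δ^2 / 2 := by
    rw [← MeasureTheory.integral_Ioc_eq_integral_Ioo, ← integral_of_le hδ0.le,
      integral_id]
    ring
  have hgval : (∫ r in Set.Ioo (0:ℝ) δ, g r) = 4*A^2 * δ ^ ((1:ℝ)/2) + T^2 * δ^2 := by
    rw [hgdef, MeasureTheory.integral_add hg1int hg2int,
      MeasureTheory.integral_const_mul, MeasureTheory.integral_const_mul, hval1, hval2]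
    ring
  -- final arithmetic
  have e1 : A^2 * δ ^ ((1:ℝ)/2) = K ^ (-2:ℝ) / (α - 1/4)^2 := by
    rw [hAdef, div_pow, ← Real.rpow_natCast (δ ^ (α - 1/4)) 2, ← Real.rpow_mul hδ0.le,
      div_mul_eq_mul_div, ← Real.rpow_add hδ0, hδdef, ← Real.rpow_mul hK0.le]
    congr 2
    push_cast
    field_simp [hαdef]
    have hωα : ω * α = 1 := by rw [hαdef]; field_simp
    linear_combination (-16) * hωα
  have e2 : T^2 * δ^2 = K ^ (-2:ℝ) := by
    rw [hTdef, hδdef, ← Real.rpow_natCast (K ^ (ω - 1)) 2, ← Real.rpow_natCast (K ^ (-ω)) 2,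
      ← Real.rpow_mul hK0.le, ← Real.rpow_mul hK0.le, ← Real.rpow_add hK0]
    congr 1
    push_cast
    ring
  have e3 : K ^ (-2:ℝ) = 1 / K^2 := by
    rw [Real.rpow_neg hK0.le, show ((2:ℝ)) = ((2:ℕ):ℝ) by norm_num, Real.rpow_natCast, one_div]
  calc (∫ r in Set.Ioo (0:ℝ) δ, (∫ s in Set.Ioi r, f s) ^ 2 * r)
      ≤ ∫ r in Set.Ioo (0:ℝ) δ, g r := hmain
    _ = 4*A^2 * δ ^ ((1:ℝ)/2) + T^2 * δ^2 := hgval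
    _ = (4/(α - 1/4)^2 + 1) / K^2 := by
        rw [show 4*A^2 * δ ^ ((1:ℝ)/2) = 4 * (A^2 * δ ^ ((1:ℝ)/2)) by ring, e1, e2, e3]
        ring
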